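/- arXiv:2212.04707 — 3 statements merged into one kernel-verified Lean document; each statement's English description precedes it below -/
import Mathlib

section
/- Let ξ₁,…,ξ_K be i.i.d. uniform on [0,D] (D > 0) and let M̄ be a positive integer, d > 0, λ > 0, u ∈ ℝ with (π D/λ)·u ≠ 0 and sin((π d/λ)·u) ≠ 0. Define G = (1/(K·M̄))·Σ_{k=1}^{K} Σ_{m=1}^{M̄} exp(i·(2π/λ)·(ξ_k + (m−1)d)·u). Then |E[G]| = |sin(M̄φ)/(M̄ sin φ)| · |sin(ρ)/ρ| where φ = (π d/λ)·u and ρ = (π D/λ)·u. -/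
open MeasureTheory ProbabilityTheory

/-- The uniform probability measure on the interval `[0, D]`. -/
noncomputable def uniformIcc (D : ℝ) : Measure ℝ :=
  (ENNReal.ofReal D)⁻¹ • (volume.restrict (Set.Icc 0 D))

lemma aux_abs_exp (θ : ℝ) :
    ‖Complex.exp ((θ : ℂ) * Complex.I) - 1‖ = 2 * |Real.sin (θ / 2)| := by
  have h2 : (2 : ℂ) * Complex.sin ((θ/2 : ℝ) : ℂ) * Complex.I
      = Complex.exp (((θ/2 : ℝ) : ℂ) * Complex.I) - Complex.exp ((-((θ/2 : ℝ) : ℂ)) * Complex.I) := by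
    rw [Complex.sin]
    linear_combination (Complex.exp ((-((θ/2 : ℝ) : ℂ)) * Complex.I)
      - Complex.exp (((θ/2 : ℝ) : ℂ) * Complex.I)) * Complex.I_mul_I
  have h : Complex.exp ((θ : ℂ) * Complex.I) - 1
      = Complex.exp (((θ/2 : ℝ) : ℂ) * Complex.I) * ((2 : ℂ) * Complex.sin ((θ/2 : ℝ) : ℂ) * Complex.I) := by
    rw [h2, mul_sub, ← Complex.exp_add, ← Complex.exp_add]
    have e1 : ((θ/2 : ℝ) : ℂ) * Complex.I + ((θ/2 : ℝ) : ℂ) * Complex.I = (θ : ℂ) * Complex.I := by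
      push_cast; ring
    have e2 : ((θ/2 : ℝ) : ℂ) * Complex.I + (-((θ/2 : ℝ) : ℂ)) * Complex.I = 0 := by ring
    rw [e1, e2, Complex.exp_zero]
  rw [h, norm_mul, Complex.norm_exp_ofReal_mul_I, one_mul, norm_mul, norm_mul,
    Complex.norm_I, mul_one, ← Complex.ofReal_sin, Complex.norm_real]
  norm_num [Real.norm_eq_abs]

/-- Proposition 3 (first part): for i.i.d. subarray positions uniform on `[0,D]`, the expected
angular correlation coefficient `G = (1/(K·M̄))·Σ_{k,m} exp(i·(2π/λ)(ξ_k+(m−1)d)·u)` satisfies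
`|E[G]| = |sin(M̄φ)/(M̄ sin φ)| · |sin ρ/ρ|` with `φ = (π d/λ)u`, `ρ = (π D/λ)u`. -/
theorem abs_expectation_corr_coeff
    {Ω : Type*} [MeasurableSpace Ω] (P : Measure Ω) [IsProbabilityMeasure P]
    (K M : ℕ) (hK : 0 < K) (hM : 0 < M)
    (D lam d u : ℝ) (hD : 0 < D) (hlam : 0 < lam) (hd : 0 < d)
    (hρ : Real.pi * D / lam * u ≠ 0)
    (hφ : Real.sin (Real.pi * d / lam * u) ≠ 0)
    (ξ : Fin K → Ω → ℝ) (hmeas : ∀ k, Measurable (ξ k))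
    (hindep : iIndepFun ξ P)
    (hlaw : ∀ k, Measure.map (ξ k) P = uniformIcc D) :
    ‖(∫ ω, (1 / ((K : ℂ) * (M : ℂ))) *
        ∑ k : Fin K, ∑ m ∈ Finset.range M,
          Complex.exp (Complex.I * ((2 * Real.pi / lam * (ξ k ω + (m : ℝ) * d) * u : ℝ) : ℂ)) ∂P)‖
      = |Real.sin ((M : ℝ) * (Real.pi * d / lam * u)) / ((M : ℝ) * Real.sin (Real.pi * d / lam * u))|
        * |Real.sin (Real.pi * D / lam * u) / (Real.pi * D / lam * u)| := by
  set φ : ℝ := Real.pi * d / lam * u with hφdef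
  set ρ : ℝ := Real.pi * D / lam * u with hρdef
  set c : ℝ := 2 * Real.pi / lam * u with hcdef
  clear_value φ ρ c
  have hc0 : c ≠ 0 := by
    intro h
    apply hρ
    have : ρ = c * D / 2 := by rw [hρdef, hcdef]; ring
    rw [this, h]; ring
  have hK0 : (K : ℝ) ≠ 0 := Nat.cast_ne_zero.mpr hK.ne'
  have hM0 : (M : ℝ) ≠ 0 := Nat.cast_ne_zero.mpr hM.ne'
  -- pointwise factorization
  have key : ∀ (x : ℝ) (m : ℕ),
      Complex.exp (Complex.I * ((2 * Real.pi / lam * (x + (m : ℝ) * d) * u : ℝ) : ℂ))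
        = Complex.exp (((c * x : ℝ) : ℂ) * Complex.I)
            * (Complex.exp (((2 * φ : ℝ) : ℂ) * Complex.I)) ^ m := by
    intro x m
    rw [← Complex.exp_nat_mul, ← Complex.exp_add]
    congr 1
    push_cast [hcdef, hφdef]
    field_simp
  have hgmeas : Measurable fun x : ℝ => Complex.exp (((c * x : ℝ) : ℂ) * Complex.I) := by
    fun_prop
  have hint : ∀ k : Fin K,
      Integrable (fun ω => Complex.exp (((c * ξ k ω : ℝ) : ℂ) * Complex.I)) P := by
    intro k
    refine (integrable_const (1 : ℝ)).mono'
      ((hgmeas.comp (hmeas k)).aestronglyMeasurable) (ae_of_all _ fun ω => ?_)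
    rw [Complex.norm_exp_ofReal_mul_I]
  have hcI0 : ((c : ℝ) : ℂ) * Complex.I ≠ 0 := by
    simp [Complex.ext_iff, hc0]
  -- expectation over one uniform variable
  have hE : (∫ x, Complex.exp (((c * x : ℝ) : ℂ) * Complex.I) ∂(uniformIcc D))
      = ((D⁻¹ : ℝ) : ℂ) * ((Complex.exp (((2 * ρ : ℝ) : ℂ) * Complex.I) - 1)
          / (((c : ℝ) : ℂ) * Complex.I)) := by
    have h1 : ∀ x : ℝ, Complex.exp (((c * x : ℝ) : ℂ) * Complex.I)
        = Complex.exp ((((c : ℝ) : ℂ) * Complex.I) * x) := by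
      intro x; congr 1; push_cast; ring
    rw [uniformIcc, integral_smul_measure]
    simp only [h1]
    rw [MeasureTheory.integral_Icc_eq_integral_Ioc, ← intervalIntegral.integral_of_le hD.le,
      integral_exp_mul_complex hcI0, ENNReal.toReal_inv, ENNReal.toReal_ofReal hD.le]
    rw [show (((c : ℝ) : ℂ) * Complex.I) * (D : ℂ) = ((2 * ρ : ℝ) : ℂ) * Complex.I by
      rw [hρdef, hcdef]; push_cast; ring]
    rw [show (((c : ℝ) : ℂ) * Complex.I) * ((0 : ℝ) : ℂ) = 0 by push_cast; ring,
      Complex.exp_zero, Complex.real_smul]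
  -- compute the integral
  have hI : (∫ ω, (1 / ((K : ℂ) * (M : ℂ))) *
        ∑ k : Fin K, ∑ m ∈ Finset.range M,
          Complex.exp (Complex.I * ((2 * Real.pi / lam * (ξ k ω + (m : ℝ) * d) * u : ℝ) : ℂ)) ∂P)
      = (1 / ((K : ℂ) * (M : ℂ)))
          * (∑ m ∈ Finset.range M, (Complex.exp (((2 * φ : ℝ) : ℂ) * Complex.I)) ^ m)
          * ((K : ℂ) * (((D⁻¹ : ℝ) : ℂ) * ((Complex.exp (((2 * ρ : ℝ) : ℂ) * Complex.I) - 1)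
              / (((c : ℝ) : ℂ) * Complex.I)))) := by
    have hfun : ∀ ω, (1 / ((K : ℂ) * (M : ℂ))) *
        ∑ k : Fin K, ∑ m ∈ Finset.range M,
          Complex.exp (Complex.I * ((2 * Real.pi / lam * (ξ k ω + (m : ℝ) * d) * u : ℝ) : ℂ))
        = ((1 / ((K : ℂ) * (M : ℂ)))
            * (∑ m ∈ Finset.range M, (Complex.exp (((2 * φ : ℝ) : ℂ) * Complex.I)) ^ m))
          * ∑ k : Fin K, Complex.exp (((c * ξ k ω : ℝ) : ℂ) * Complex.I) := by
      intro ω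
      simp only [key]
      simp only [← Finset.mul_sum]
      rw [← Finset.sum_mul]
      ring
    simp only [hfun]
    rw [MeasureTheory.integral_const_mul, integral_finset_sum _ (fun k _ => hint k)]
    have hmap : ∀ k : Fin K, (∫ ω, Complex.exp (((c * ξ k ω : ℝ) : ℂ) * Complex.I) ∂P)
        = ∫ x, Complex.exp (((c * x : ℝ) : ℂ) * Complex.I) ∂(uniformIcc D) := by
      intro k
      rw [← hlaw k]
      exact (MeasureTheory.integral_map (hmeas k).aemeasurable
        hgmeas.aestronglyMeasurable).symm
    simp only [hmap, hE, Finset.sum_const, Finset.card_univ, Fintype.card_fin, nsmul_eq_mul]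
  rw [hI]
  -- geometric sum
  have hw1 : Complex.exp (((2 * φ : ℝ) : ℂ) * Complex.I) ≠ 1 := by
    intro h
    have h0 : ‖Complex.exp (((2 * φ : ℝ) : ℂ) * Complex.I) - 1‖ = 0 := by
      rw [h]; simp
    rw [aux_abs_exp] at h0
    have hs : |Real.sin (2 * φ / 2)| = 0 := by linarith [abs_nonneg (Real.sin (2 * φ / 2))]
    have hs2 : Real.sin (2 * φ / 2) = 0 := abs_eq_zero.mp hs
    have h22 : 2 * φ / 2 = φ := by ring
    rw [h22] at hs2
    exact hφ hs2
  rw [geom_sum_eq hw1]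
  have hwM : (Complex.exp (((2 * φ : ℝ) : ℂ) * Complex.I)) ^ M
      = Complex.exp ((((M : ℝ) * (2 * φ) : ℝ) : ℂ) * Complex.I) := by
    rw [← Complex.exp_nat_mul]; congr 1; push_cast; ring
  rw [hwM]
  simp only [norm_mul, norm_div, norm_one, Complex.norm_natCast, Complex.norm_real,
    Real.norm_eq_abs, Complex.norm_I, mul_one]
  rw [aux_abs_exp, aux_abs_exp, aux_abs_exp]
  rw [show (M : ℝ) * (2 * φ) / 2 = (M : ℝ) * φ by ring, show 2 * φ / 2 = φ by ring,
    show 2 * ρ / 2 = ρ by ring]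
  have hρc : |ρ| = |c| * D / 2 := by
    rw [show ρ = c * D / 2 by rw [hρdef, hcdef]; ring, abs_div, abs_mul, abs_of_pos hD]
    norm_num
  rw [abs_div, abs_div, abs_mul, Nat.abs_cast, hρc, abs_inv, abs_of_pos hD]
  have hsφ : |Real.sin φ| ≠ 0 := abs_ne_zero.mpr hφ
  have hcabs : |c| ≠ 0 := abs_ne_zero.mpr hc0
  field_simp
end

section
/- Let ξ₁,…,ξ_K be i.i.d. uniform on [0,D] (D > 0), M̄ a positive integer, d > 0, λ > 0, u ∈ ℝ with ρ = (π D/λ)·u ≠ 0 and sin((π d/λ)·u) ≠ 0. With G = (1/(K·M̄))·Σ_{k,m} exp(i·(2π/λ)·(ξ_k + (m−1)d)·u) and M = sin(M̄φ)/(M̄ sin φ), φ = (π d/λ)·u, we have E[|G|²] = |M|²·(1/K + (1 − 1/K)·(sin ρ/ρ)²). -/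
open MeasureTheory ProbabilityTheory

lemma normSq_exp_theta (θ : ℝ) :
    Complex.normSq (Complex.exp ((θ : ℂ) * Complex.I) - 1) = 4 * Real.sin (θ / 2) ^ 2 := by
  have h : Complex.exp ((θ:ℂ) * Complex.I) - 1
      = ((Real.cos θ - 1 : ℝ) : ℂ) + ((Real.sin θ : ℝ) : ℂ) * Complex.I := by
    rw [Complex.exp_mul_I, ← Complex.ofReal_cos, ← Complex.ofReal_sin]
    push_cast; ring
  rw [h, Complex.normSq_add_mul_I]
  have h2 : Real.cos θ = Real.cos (θ/2)^2 - Real.sin (θ/2)^2 := by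
    have := Real.cos_two_mul' (θ/2)
    rw [show 2 * (θ/2) = θ by ring] at this
    linarith
  nlinarith [Real.sin_sq_add_cos_sq θ, Real.sin_sq_add_cos_sq (θ/2)]

lemma uniformIcc_prob {D : ℝ} (hD : 0 < D) : IsProbabilityMeasure (uniformIcc D) := by
  constructor
  rw [uniformIcc, Measure.smul_apply, Measure.restrict_apply MeasurableSet.univ,
    Set.univ_inter, Real.volume_Icc]
  simp only [sub_zero, smul_eq_mul]
  rw [ENNReal.inv_mul_cancel (by simpa using hD) ENNReal.ofReal_ne_top]

set_option maxHeartbeats 1000000 in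
/-- Proposition 3 (second part): for i.i.d. subarray positions uniform on `[0,D]`,
`E[|G|²] = |M|²·(1/K + (1 − 1/K)(sin ρ/ρ)²)` where `M = sin(M̄φ)/(M̄ sin φ)`,
`φ = (π d/λ)u`, `ρ = (π D/λ)u`. -/
theorem expectation_sq_abs_corr_coeff
    {Ω : Type*} [MeasurableSpace Ω] (P : Measure Ω) [IsProbabilityMeasure P]
    (K M : ℕ) (hK : 0 < K) (hM : 0 < M)
    (D lam d u : ℝ) (hD : 0 < D) (hlam : 0 < lam) (hd : 0 < d)
    (hρ : Real.pi * D / lam * u ≠ 0)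
    (hφ : Real.sin (Real.pi * d / lam * u) ≠ 0)
    (ξ : Fin K → Ω → ℝ) (hmeas : ∀ k, Measurable (ξ k))
    (hindep : iIndepFun ξ P)
    (hlaw : ∀ k, Measure.map (ξ k) P = uniformIcc D) :
    (∫ ω, (‖(1 / ((K : ℂ) * (M : ℂ))) *
        ∑ k : Fin K, ∑ m ∈ Finset.range M,
          Complex.exp (Complex.I * ((2 * Real.pi / lam * (ξ k ω + (m : ℝ) * d) * u : ℝ) : ℂ))‖) ^ 2 ∂P)
      = (Real.sin ((M : ℝ) * (Real.pi * d / lam * u))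
            / ((M : ℝ) * Real.sin (Real.pi * d / lam * u))) ^ 2
        * (1 / (K : ℝ) + (1 - 1 / (K : ℝ))
            * (Real.sin (Real.pi * D / lam * u) / (Real.pi * D / lam * u)) ^ 2) := by
  haveI := uniformIcc_prob hD
  set φ : ℝ := Real.pi * d / lam * u with hφdef
  set ρ : ℝ := Real.pi * D / lam * u with hρdef
  have hu : u ≠ 0 := by
    intro h; exact hρ (by rw [hρdef, h, mul_zero])
  set a : ℝ := 2 * Real.pi / lam * u with ha
  have hane : a ≠ 0 := by
    rw [ha]
    exact mul_ne_zero (div_ne_zero (by positivity) hlam.ne') hu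
  have haD : a * D = 2 * ρ := by rw [ha, hρdef]; field_simp
  have had : a * d = 2 * φ := by rw [ha, hφdef]; field_simp
  have hρne : ρ ≠ 0 := hρ
  -- the elementary wave function
  set f : ℝ → ℂ := fun x => Complex.exp (Complex.I * ((a * x : ℝ) : ℂ)) with hf
  have hfcont : Continuous f := by
    apply Complex.continuous_exp.comp
    exact continuous_const.mul (Complex.continuous_ofReal.comp (continuous_const.mul continuous_id))
  have hfabs : ∀ x, ‖f x‖ = 1 := by
    intro x
    rw [hf]
    simp [Complex.norm_exp]
  set g : ℝ → ℂ := fun x => (starRingEnd ℂ) (f x) with hg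
  have hgcont : Continuous g := Complex.continuous_conj.comp hfcont
  set S : ℂ := ∑ m ∈ Finset.range M, Complex.exp (Complex.I * ((a * (m * d) : ℝ) : ℂ)) with hS
  set T : Ω → ℂ := fun ω => ∑ k : Fin K, f (ξ k ω) with hT
  -- Step 1: rewrite the double sum as S * T ω
  have hpt : ∀ ω, (∑ k : Fin K, ∑ m ∈ Finset.range M,
      Complex.exp (Complex.I * ((2 * Real.pi / lam * (ξ k ω + (m : ℝ) * d) * u : ℝ) : ℂ)))
      = S * T ω := by
    intro ω
    have hterm : ∀ (x : ℝ) (m : ℕ),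
        Complex.exp (Complex.I * ((2 * Real.pi / lam * (x + (m : ℝ) * d) * u : ℝ) : ℂ))
        = Complex.exp (Complex.I * ((a * (m * d) : ℝ) : ℂ)) * f x := by
      intro x m
      rw [hf, ← Complex.exp_add]
      congr 1
      rw [ha]
      push_cast
      field_simp
      ring
    calc (∑ k : Fin K, ∑ m ∈ Finset.range M,
        Complex.exp (Complex.I * ((2 * Real.pi / lam * (ξ k ω + (m : ℝ) * d) * u : ℝ) : ℂ)))
        = ∑ k : Fin K, ∑ m ∈ Finset.range M,
            Complex.exp (Complex.I * ((a * (m * d) : ℝ) : ℂ)) * f (ξ k ω) := by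
          refine Finset.sum_congr rfl fun k _ => Finset.sum_congr rfl fun m _ => ?_
          exact hterm (ξ k ω) m
      _ = ∑ k : Fin K, S * f (ξ k ω) := by
          refine Finset.sum_congr rfl fun k _ => ?_
          rw [hS, Finset.sum_mul]
      _ = S * T ω := by rw [hT, ← Finset.mul_sum]
  -- Step 2: rewrite |·|² pointwise
  have hKM : ((K : ℝ) * (M : ℝ)) ≠ 0 := by positivity
  have habs2 : ∀ ω, (‖(1 / ((K : ℂ) * (M : ℂ))) * (S * T ω)‖) ^ 2
      = (Complex.normSq S / ((K : ℝ) * (M : ℝ)) ^ 2) * Complex.normSq (T ω) := by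
    intro ω
    rw [← Complex.normSq_eq_norm_sq, map_mul, map_mul]
    have h1 : Complex.normSq (1 / ((K : ℂ) * (M : ℂ))) = 1 / ((K : ℝ) * (M : ℝ)) ^ 2 := by
      rw [map_div₀, map_one, show ((K : ℂ) * (M : ℂ)) = (((K : ℝ) * (M : ℝ) : ℝ) : ℂ) by push_cast; ring,
        Complex.normSq_ofReal]
      ring
    rw [h1]; ring
  -- the single-particle average
  set c : ℂ := ∫ x, f x ∂(uniformIcc D) with hc
  set q : ℝ := Complex.normSq c with hqdef
  -- Step 3: expectation of cross terms
  have hcross : ∀ k j : Fin K, k ≠ j →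
      (∫ ω, f (ξ k ω) * g (ξ j ω) ∂P) = (q : ℂ) := by
    intro k j hkj
    have hind : IndepFun (ξ k) (ξ j) P := hindep.indepFun hkj
    rw [indepFun_iff_map_prod_eq_prod_map_map (hmeas k).aemeasurable (hmeas j).aemeasurable] at hind
    have hmp := integral_map (μ := P) (φ := fun ω => (ξ k ω, ξ j ω))
      ((hmeas k).prodMk (hmeas j)).aemeasurable
      (f := fun z : ℝ × ℝ => f z.1 * g z.2)
      (((hfcont.comp continuous_fst).mul (hgcont.comp continuous_snd)).aestronglyMeasurable)
    rw [← hmp, hind, hlaw k, hlaw j, integral_prod_mul, hg]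
    rw [integral_conj, ← hc, Complex.mul_conj, hqdef]
  have hdiag : ∀ k : Fin K, (∫ ω, f (ξ k ω) * g (ξ k ω) ∂P) = 1 := by
    intro k
    have h1 : ∀ ω, f (ξ k ω) * g (ξ k ω) = 1 := by
      intro ω
      rw [hg, Complex.mul_conj]
      rw [Complex.normSq_eq_norm_sq, hfabs]
      norm_num
    simp only [h1]
    simp
  -- integrability of the products
  have hIntfg : ∀ k j : Fin K, Integrable (fun ω => f (ξ k ω) * g (ξ j ω)) P := by
    intro k j
    apply (integrable_const (1 : ℝ)).mono'
    · exact (((hfcont.measurable.comp (hmeas k))).mul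
        (hgcont.measurable.comp (hmeas j))).aestronglyMeasurable
    · filter_upwards with ω
      rw [norm_mul, hfabs, hg]
      simp [hfabs]
  -- decompose T * conj T
  have hTmul : ∀ ω, T ω * (starRingEnd ℂ) (T ω)
      = ∑ k : Fin K, ∑ j : Fin K, f (ξ k ω) * g (ξ j ω) := by
    intro ω
    rw [hT, map_sum, Finset.sum_mul_sum]
  have hTTint : Integrable (fun ω => T ω * (starRingEnd ℂ) (T ω)) P := by
    have : (fun ω => T ω * (starRingEnd ℂ) (T ω))
        = fun ω => ∑ k : Fin K, ∑ j : Fin K, f (ξ k ω) * g (ξ j ω) := funext hTmul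
    rw [this]
    exact integrable_finset_sum _ fun k _ => integrable_finset_sum _ fun j _ => hIntfg k j
  -- the complex second moment
  have hTc : (∫ ω, T ω * (starRingEnd ℂ) (T ω) ∂P)
      = (((K : ℝ) + ((K : ℝ) ^ 2 - (K : ℝ)) * q : ℝ) : ℂ) := by
    have h1 : (∫ ω, T ω * (starRingEnd ℂ) (T ω) ∂P)
        = ∑ k : Fin K, ∑ j : Fin K, ∫ ω, f (ξ k ω) * g (ξ j ω) ∂P := by
      simp_rw [hTmul]
      rw [integral_finset_sum _ fun k _ => integrable_finset_sum _ fun j _ => hIntfg k j]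
      exact Finset.sum_congr rfl fun k _ => integral_finset_sum _ fun j _ => hIntfg k j
    rw [h1]
    have h2 : ∀ k : Fin K, (∑ j : Fin K, ∫ ω, f (ξ k ω) * g (ξ j ω) ∂P)
        = (q : ℂ) * K + (1 - q) := by
      intro k
      have h3 : ∀ j : Fin K, (∫ ω, f (ξ k ω) * g (ξ j ω) ∂P)
          = (q : ℂ) + (if k = j then 1 - (q : ℂ) else 0) := by
        intro j
        by_cases hkj : k = j
        · subst hkj; rw [hdiag k]; simp
        · rw [hcross k j hkj]; simp [hkj]
      simp_rw [h3]
      rw [Finset.sum_add_distrib, Finset.sum_const, Finset.sum_ite_eq]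
      simp [Finset.card_univ]
      ring
    simp_rw [h2]
    rw [Finset.sum_const, Finset.card_univ, Fintype.card_fin]
    push_cast
    ring
  -- the real second moment
  have hTnormSq : ∫ ω, Complex.normSq (T ω) ∂P = (K : ℝ) + ((K : ℝ) ^ 2 - (K : ℝ)) * q := by
    have h1 : ∀ ω, (Complex.normSq (T ω) : ℝ) = (T ω * (starRingEnd ℂ) (T ω)).re := by
      intro ω; rw [Complex.mul_conj, Complex.ofReal_re]
    simp_rw [h1]
    have h2 := integral_re (μ := P) (𝕜 := ℂ) hTTint
    simp only [RCLike.re_to_complex] at h2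
    rw [h2, hTc, Complex.ofReal_re]
  -- compute c
  have hIa : Complex.I * (a : ℂ) ≠ 0 := by simp [Complex.ext_iff, hane]
  have hIcc : ∫ x in Set.Icc (0:ℝ) D, f x ∂volume
      = (Complex.exp (((a * D : ℝ) : ℂ) * Complex.I) - 1) / (Complex.I * (a : ℂ)) := by
    have h1 : ∀ x : ℝ, f x = Complex.exp ((Complex.I * (a : ℂ)) * (x : ℂ)) := by
      intro x; simp only [hf]; congr 1; push_cast; ring
    simp_rw [h1]
    rw [MeasureTheory.integral_Icc_eq_integral_Ioc, ← intervalIntegral.integral_of_le hD.le,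
      integral_exp_mul_complex hIa]
    have h2 : (Complex.I * (a:ℂ)) * ((0:ℝ):ℂ) = 0 := by simp
    rw [h2, Complex.exp_zero]
    congr 2
    push_cast; ring
  have hcval : c = (D⁻¹ : ℝ) • ((Complex.exp (((a * D : ℝ) : ℂ) * Complex.I) - 1)
      / (Complex.I * (a : ℂ))) := by
    rw [hc, uniformIcc, integral_smul_measure, hIcc, ENNReal.toReal_inv,
      ENNReal.toReal_ofReal hD.le]
  have hq : q = (Real.sin ρ / ρ) ^ 2 := by
    rw [hqdef, hcval, Complex.real_smul, map_mul, Complex.normSq_ofReal, map_div₀,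
      normSq_exp_theta, map_mul, Complex.normSq_I, Complex.normSq_ofReal]
    rw [show a * D / 2 = ρ by rw [haD]; ring]
    have hD2 : D ≠ 0 := hD.ne'
    rw [div_pow]
    field_simp
    ring_nf
    linear_combination (-(Real.sin ρ ^ 2) * (a * D + 2 * ρ)) * haD
  -- compute |S|²
  set z : ℂ := Complex.exp (Complex.I * ((a * d : ℝ) : ℂ)) with hz
  have hz1 : z ≠ 1 := by
    intro h
    rw [hz, Complex.exp_eq_one_iff] at h
    obtain ⟨n, hn⟩ := h
    have him : (a * d : ℝ) = (n : ℝ) * (2 * Real.pi) := by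
      have := congrArg Complex.im hn
      simpa using this
    apply hφ
    have : φ = (n : ℝ) * Real.pi := by
      have := had
      rw [him] at this
      linarith
    rw [this]
    exact Real.sin_int_mul_pi n
  have hSgeom : S = (z ^ M - 1) / (z - 1) := by
    rw [hS]
    have h1 : ∀ m ∈ Finset.range M, Complex.exp (Complex.I * ((a * (m * d) : ℝ) : ℂ)) = z ^ m := by
      intro m _
      rw [hz, ← Complex.exp_nat_mul]
      congr 1
      push_cast
      ring
    rw [Finset.sum_congr rfl h1, geom_sum_eq hz1]
  have hSsq : Complex.normSq S = Real.sin ((M : ℝ) * φ) ^ 2 / Real.sin φ ^ 2 := by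
    rw [hSgeom, map_div₀]
    have h1 : z ^ M - 1 = Complex.exp ((((M : ℝ) * (a * d) : ℝ) : ℂ) * Complex.I) - 1 := by
      rw [hz, ← Complex.exp_nat_mul]
      congr 2
      push_cast
      ring
    have h2 : z - 1 = Complex.exp (((a * d : ℝ) : ℂ) * Complex.I) - 1 := by
      rw [hz]; congr 2; push_cast; ring
    rw [h1, h2, normSq_exp_theta, normSq_exp_theta]
    rw [show (M : ℝ) * (a * d) / 2 = (M : ℝ) * φ by rw [had]; ring,
      show (a * d) / 2 = φ by rw [had]; ring]
    rw [mul_div_mul_left _ _ (by norm_num : (4 : ℝ) ≠ 0)]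
  -- assemble
  calc (∫ ω, (‖(1 / ((K : ℂ) * (M : ℂ))) *
        ∑ k : Fin K, ∑ m ∈ Finset.range M,
          Complex.exp (Complex.I * ((2 * Real.pi / lam * (ξ k ω + (m : ℝ) * d) * u : ℝ) : ℂ))‖) ^ 2 ∂P)
      = ∫ ω, (Complex.normSq S / ((K : ℝ) * (M : ℝ)) ^ 2) * Complex.normSq (T ω) ∂P := by
        refine integral_congr_ae (Filter.Eventually.of_forall fun ω => ?_)
        simp only [hpt, habs2]
    _ = (Complex.normSq S / ((K : ℝ) * (M : ℝ)) ^ 2) * ∫ ω, Complex.normSq (T ω) ∂P := by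
        rw [integral_const_mul]
    _ = (Real.sin ((M : ℝ) * φ) ^ 2 / Real.sin φ ^ 2 / ((K : ℝ) * (M : ℝ)) ^ 2)
          * ((K : ℝ) + ((K : ℝ) ^ 2 - (K : ℝ)) * q) := by rw [hSsq, hTnormSq]
    _ = (Real.sin ((M : ℝ) * φ) / ((M : ℝ) * Real.sin φ)) ^ 2
          * (1 / (K : ℝ) + (1 - 1 / (K : ℝ)) * (Real.sin ρ / ρ) ^ 2) := by
        rw [← hq]
        have hKne : (K : ℝ) ≠ 0 := Nat.cast_ne_zero.mpr hK.ne'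
        have hMne : (M : ℝ) ≠ 0 := Nat.cast_ne_zero.mpr hM.ne'
        field_simp
end

section
/- Let s̄₁,…,s̄_L ∈ ℂ^K satisfy |[s̄_l]_k| = |s_l| for all k (constant modulus per row), and define the sample cumulant Cum(a,b,c,d) = (1/K)·(a⊙b)ᵀ(c⊙d) − (1/K²)·(aᵀb·cᵀd + aᵀc·bᵀd + aᵀd·bᵀc). Then for indices r,p,q, with R_{i,j} = (1/K)·s̄_jᴴ s̄_i and R̃_{i,j} = (1/K)·s̄_jᵀ s̄_i, one has Cum(s̄_r, conj(s̄_r), s̄_p, conj(s̄_q)) = −R̃_{r,p}·conj(R̃_{r,q}) − R_{r,q}·R_{p,r}. -/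
open Complex

/-- The sample fourth-order cross-cumulant used in the JADE algorithm. -/
noncomputable def sampleCum {K : ℕ} (a b c d : Fin K → ℂ) : ℂ :=
  (1 / (K : ℂ)) * ∑ k : Fin K, (a k * b k) * (c k * d k)
    - (1 / (K : ℂ) ^ 2) *
        ((∑ k : Fin K, a k * b k) * (∑ k : Fin K, c k * d k)
          + (∑ k : Fin K, a k * c k) * (∑ k : Fin K, b k * d k)
          + (∑ k : Fin K, a k * d k) * (∑ k : Fin K, b k * c k))

/-- Sample covariance entry `R_{i,j} = (1/K)·s̄_jᴴ s̄_i`. -/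
noncomputable def sampleR {K L : ℕ} (sb : Fin L → Fin K → ℂ) (i j : Fin L) : ℂ :=
  (1 / (K : ℂ)) * ∑ k : Fin K, (starRingEnd ℂ) (sb j k) * sb i k

/-- Pseudo-covariance entry `R̃_{i,j} = (1/K)·s̄_jᵀ s̄_i`. -/
noncomputable def sampleRt {K L : ℕ} (sb : Fin L → Fin K → ℂ) (i j : Fin L) : ℂ :=
  (1 / (K : ℂ)) * ∑ k : Fin K, sb j k * sb i k

/-- Simplification of the JADE cumulant under the constant-modulus structure
(Equation (16) of the paper). -/
theorem jade_cumulant_constant_modulus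
    (K L : ℕ) (hK : 0 < K) (sb : Fin L → Fin K → ℂ) (m : Fin L → ℝ)
    (hcm : ∀ l k, ‖sb l k‖ = m l) (r p q : Fin L) :
    sampleCum (sb r) (fun k => (starRingEnd ℂ) (sb r k)) (sb p)
        (fun k => (starRingEnd ℂ) (sb q k))
      = -(sampleRt sb r p * (starRingEnd ℂ) (sampleRt sb r q))
        - sampleR sb r q * sampleR sb p r := by
  have hKc : (K:ℂ) ≠ 0 := Nat.cast_ne_zero.mpr hK.ne'
  have h1 : ∀ k, sb r k * (starRingEnd ℂ) (sb r k) = (((m r)^2 : ℝ) : ℂ) := by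
    intro k
    rw [Complex.mul_conj, ← Complex.sq_norm, hcm]
  have hsum1 : ∑ k : Fin K, sb r k * (starRingEnd ℂ) (sb r k)
      = (K:ℂ) * (((m r)^2 : ℝ) : ℂ) := by
    simp [h1, Finset.sum_const, mul_comm]
  have hsum2 : ∑ k : Fin K, (sb r k * (starRingEnd ℂ) (sb r k)) * (sb p k * (starRingEnd ℂ) (sb q k))
      = (((m r)^2 : ℝ) : ℂ) * ∑ k : Fin K, sb p k * (starRingEnd ℂ) (sb q k) := by
    rw [Finset.mul_sum]
    exact Finset.sum_congr rfl fun k _ => by rw [h1]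
  simp only [sampleCum, sampleRt, sampleR, hsum2, hsum1, map_mul, map_sum, map_one,
    map_div₀, map_natCast, Complex.conj_conj]
  have c1 : ∑ k : Fin K, sb p k * sb r k = ∑ k : Fin K, sb r k * sb p k := by
    exact Finset.sum_congr rfl fun k _ => mul_comm _ _
  have c2 : ∑ k : Fin K, (starRingEnd ℂ) (sb q k) * (starRingEnd ℂ) (sb r k)
      = ∑ k : Fin K, (starRingEnd ℂ) (sb r k) * (starRingEnd ℂ) (sb q k) := by
    exact Finset.sum_congr rfl fun k _ => mul_comm _ _
  have c3 : ∑ k : Fin K, (starRingEnd ℂ) (sb q k) * sb r k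
      = ∑ k : Fin K, sb r k * (starRingEnd ℂ) (sb q k) := by
    exact Finset.sum_congr rfl fun k _ => mul_comm _ _
  have c4 : ∑ k : Fin K, (starRingEnd ℂ) (sb r k) * sb p k
      = ∑ k : Fin K, sb p k * (starRingEnd ℂ) (sb r k) := by
    exact Finset.sum_congr rfl fun k _ => mul_comm _ _
  field_simp
  rw [c1, c2, c3, c4]
  ring
end
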